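/- Let τ be an even Hermitian N×N matrix with Tr τ = 0 and ‖τ‖₁ ≤ ε, written as τ = α₀·I/2^m + Σ_{k=1}^{m} Σ_{1 ≤ a_1 < … < a_{2k} ≤ 2m} α_{a_1…a_{2k}} · i^k c_{a_1}⋯c_{a_{2k}} with real coefficients. Then α₀ = 0 and |α_{a_1…a_{2k}}| ≤ ε/2^m for every subset {a_1 < … < a_{2k}}. -/

import Mathlib

open Matrix Kronecker Finset
open scoped ComplexOrder

noncomputable section

/-- A Majorana family: `2*m` Hermitian `2^m × 2^m` complex matrices squaring to the
identity and pairwise anticommuting. -/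
structure MajoranaFamily (m : ℕ) where
  c : Fin (2*m) → Matrix (Fin (2^m)) (Fin (2^m)) ℂ
  herm : ∀ j, (c j).IsHermitian
  sq : ∀ j, c j * c j = 1
  anticomm : ∀ j k, j ≠ k → c j * c k = -(c k * c j)

abbrev Mat (m : ℕ) := Matrix (Fin (2^m)) (Fin (2^m)) ℂ
abbrev Mat2 (m : ℕ) := Matrix (Fin (2^m) × Fin (2^m)) (Fin (2^m) × Fin (2^m)) ℂ
abbrev MatN (m n : ℕ) := Matrix (Fin n → Fin (2^m)) (Fin n → Fin (2^m)) ℂ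

variable {m : ℕ}

/-- A state: a positive semidefinite matrix of trace `1`. -/
def IsState {ι : Type*} [Fintype ι] (ρ : Matrix ι ι ℂ) : Prop :=
  ρ.PosSemidef ∧ ρ.trace = 1

/-- The trace norm `‖X‖₁ = Tr √(XᴴX)`. -/
def traceNorm {ι : Type*} [Fintype ι] [DecidableEq ι] (X : Matrix ι ι ℂ) : ℝ :=
  (((Matrix.posSemidef_conjTranspose_mul_self X).1.eigenvectorUnitary.1 *
    diagonal ((fun x : ℝ => (x : ℂ)) ∘ (√·) ∘ (Matrix.posSemidef_conjTranspose_mul_self X).1.eigenvalues) *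
    (star (Matrix.posSemidef_conjTranspose_mul_self X).1.eigenvectorUnitary :
      Matrix ι ι ℂ)).trace).re

/-- The rotated Majorana operators `c̃_j = Σ_i R_{ij} c_i`. -/
def tilde (F : MajoranaFamily m) (R : Matrix (Fin (2*m)) (Fin (2*m)) ℝ)
    (j : Fin (2*m)) : Mat m :=
  ∑ i, (R i j : ℂ) • F.c i

/-- Standard-form Gaussian state `2^{-m} ∏_{k=1}^m (I + i λ_k c̃_{2k-1} c̃_{2k})`
(ordered product; the factors commute). -/
def gaussStd (F : MajoranaFamily m) (R : Matrix (Fin (2*m)) (Fin (2*m)) ℝ)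
    (lam : Fin m → ℝ) : Mat m :=
  ((2:ℂ)^m)⁻¹ • (List.ofFn (fun k : Fin m =>
    (1 : Mat m) + (Complex.I * (lam k : ℂ)) •
      (tilde F R ⟨2*k.val, by omega⟩ * tilde F R ⟨2*k.val+1, by omega⟩))).prod

/-- A pure Gaussian state: a standard-form Gaussian state with all `λ_k ∈ {-1,1}`,
for some `R ∈ SO(2m,ℝ)`. -/
def IsPureGaussian (F : MajoranaFamily m) (ρ : Mat m) : Prop :=
  ∃ (R : Matrix (Fin (2*m)) (Fin (2*m)) ℝ) (lam : Fin m → ℝ),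
    Rᵀ * R = 1 ∧ R.det = 1 ∧ (∀ k, lam k = 1 ∨ lam k = -1) ∧ ρ = gaussStd F R lam

/-- A convex-Gaussian state: a finite convex combination of pure Gaussian states. -/
def IsConvexGaussian (F : MajoranaFamily m) (ρ : Mat m) : Prop :=
  ∃ (k : ℕ) (p : Fin k → ℝ) (g : Fin k → Mat m),
    (∀ i, 0 ≤ p i) ∧ (∑ i, p i) = 1 ∧ (∀ i, IsPureGaussian F (g i)) ∧
    ρ = ∑ i, p i • g i

/-- `Λ = Σ_j c_j ⊗ c_j` on `ℂ^N ⊗ ℂ^N`. -/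
def Lambda (F : MajoranaFamily m) : Mat2 m := ∑ j, F.c j ⊗ₖ F.c j

/-- Ordered product `c_{a_1} ⋯ c_{a_r}` over a finite set `S = {a_1 < … < a_r}`. -/
def majProd (F : MajoranaFamily m) (S : Finset (Fin (2*m))) : Mat m :=
  ((S.sort (· ≤ ·)).map F.c).prod

/-- An even operator: a complex linear combination of the identity and products of
an even number of distinct Majorana operators. -/
def IsEven (F : MajoranaFamily m) (X : Mat m) : Prop :=
  X ∈ Submodule.span ℂ {Y : Mat m | ∃ S : Finset (Fin (2*m)), Even S.card ∧ Y = majProd F S}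

/-- The Hermitian correlator `i^k c_{a_1} ⋯ c_{a_{2k}}` associated to a set of
cardinality `2k`. -/
def corrOp (F : MajoranaFamily m) (S : Finset (Fin (2*m))) : Mat m :=
  (Complex.I ^ (S.card / 2)) • majProd F S

/-- The operator acting as `A` on the `k`-th tensor factor of `(ℂ^N)^{⊗n}` and as the
identity on the other factors. -/
def embedAt (n : ℕ) (k : Fin n) (A : Mat m) : MatN m n :=
  fun x y => A (x k) (y k) * ∏ l ∈ Finset.univ.erase k, (if x l = y l then 1 else 0)

/-- `Λ^{k,l} = Σ_j c_j^{(k)} c_j^{(l)}` on `(ℂ^N)^{⊗n}`. -/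
def LambdaKL (F : MajoranaFamily m) (n : ℕ) (k l : Fin n) : MatN m n :=
  ∑ j, embedAt n k (F.c j) * embedAt n l (F.c j)

/-- Partial trace of an operator on `(ℂ^N)^{⊗n}` over the tensor factors `2, …, n`. -/
def ptrRest (n : ℕ) (hn : 1 ≤ n) (ρ : MatN m n) : Mat m := fun a b =>
  ∑ g : Fin (n-1) → Fin (2^m),
    ρ (fun i => if h : i.val = 0 then a else g ⟨i.val - 1, by omega⟩)
      (fun i => if h : i.val = 0 then b else g ⟨i.val - 1, by omega⟩)

/-- `ρ` has an `n`-Gaussian-symmetric extension. -/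
def HasGSExt (F : MajoranaFamily m) (n : ℕ) (hn : 1 ≤ n) (ρ : Mat m) : Prop :=
  ∃ ext : MatN m n, IsState ext ∧ ptrRest n hn ext = ρ ∧
    ∀ k l : Fin n, k ≠ l → LambdaKL F n k l * ext = 0

/-- `‖Λ‖₁ = 2(m+1) C(2m, m+1)`. -/
def lambdaNorm (m : ℕ) : ℝ := 2*(m+1) * (Nat.choose (2*m) (m+1) : ℝ)

/-- `ε(n) = min {2, 10 ‖Λ‖₁² 2^{2m} n^{-1/3}}`. -/
def epsB (m n : ℕ) : ℝ :=
  min 2 (10 * lambdaNorm m ^ 2 * 2^(2*m) / (n:ℝ) ^ ((1:ℝ)/3))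

/-- `χ(n) = (ε(n)/2) (2m)!/m!`. -/
def chiB (m n : ℕ) : ℝ :=
  epsB m n / 2 * ((Nat.factorial (2*m) : ℝ) / (Nat.factorial m : ℝ))

/-- `δ(n) = χ(n)/(1+χ(n))`. -/
def deltaB (m n : ℕ) : ℝ := chiB m n / (1 + chiB m n)

/-- The parity operator `P = i^m c_1 ⋯ c_{2m}`. -/
def parityOp (F : MajoranaFamily m) : Mat m :=
  (Complex.I ^ m) • (((List.finRange (2*m)).map F.c).prod)

/-- The operator `I^{⊗ r} ⊗ c_s ⊗ P^{⊗(n-r-1)}` on `(ℂ^N)^{⊗n}` (0-based position `r`). -/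
def dOp (F : MajoranaFamily m) (n : ℕ) (r : Fin n) (s : Fin (2*m)) : MatN m n :=
  fun x y => ∏ l : Fin n,
    if l < r then (if x l = y l then 1 else 0)
    else if l = r then F.c s (x l) (y l)
    else parityOp F (x l) (y l)

/-- The family `d_1, …, d_{2mn}`, where `d_{2m(r-1)+s} = I^{⊗(r-1)} ⊗ c_s ⊗ P^{⊗(n-r)}`. -/
def dAll (hm : 1 ≤ m) (F : MajoranaFamily m) (n : ℕ) (j : Fin (2*(m*n))) : MatN m n :=
  dOp F n
    ⟨j.val / (2*m), by
      have h1 := j.isLt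
      rw [Nat.div_lt_iff_lt_mul (by omega)]
      have h2 : n * (2*m) = 2*(m*n) := by ring
      omega⟩
    ⟨j.val % (2*m), Nat.mod_lt _ (by omega)⟩

/-- The index `2m(k-1)+j` (0-based: `2mk + j`) into a family of `2mn` Majorana operators. -/
def bigIdx (m n : ℕ) (k : Fin n) (j : Fin (2*m)) : Fin (2*(m*n)) :=
  ⟨2*m*k.val + j.val, by
    have hk : k.val + 1 ≤ n := k.isLt
    have hj := j.isLt
    have h1 : 2*m*(k.val+1) = 2*m*k.val + 2*m := by ring
    have h2 : 2*m*(k.val+1) ≤ 2*m*n := Nat.mul_le_mul le_rfl hk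
    have h3 : 2*m*n = 2*(m*n) := by ring
    omega⟩

/-- `Γ^{k,l} = Σ_{j=1}^{2m} (-1)^{m-j} e_{2m(k-1)+j} · e_{2m(l-1)+1} ⋯ ê_{2m(l-1)+j} ⋯ e_{2ml}`. -/
def GammaKL (m n : ℕ) (E : MajoranaFamily (m*n)) (k l : Fin n) :
    Matrix (Fin (2^(m*n))) (Fin (2^(m*n))) ℂ :=
  ∑ j : Fin (2*m), ((-1:ℂ) ^ ((m:ℤ) - (j.val+1 : ℤ))) •
    (E.c (bigIdx m n k j) *
      (((List.finRange (2*m)).filter (fun i => i ≠ j)).map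
        (fun i => E.c (bigIdx m n l i))).prod)

/-- `C = i^{mn} e_1 ⋯ e_{2mn}`. -/
def bigParity (m n : ℕ) (E : MajoranaFamily (m*n)) :
    Matrix (Fin (2^(m*n))) (Fin (2^(m*n))) ℂ :=
  (Complex.I ^ (m*n)) • (((List.finRange (2*(m*n))).map E.c).prod)

/-- The `n`-fold tensor power `A^{⊗n}` of a matrix on `ℂ^N`. -/
def tpow (n : ℕ) (A : Mat m) : MatN m n := fun x y => ∏ k, A (x k) (y k)



section Aux

variable (F : MajoranaFamily m)

lemma maj_pass (b : Fin (2*m)) (l : List (Fin (2*m))) :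
    F.c b * (l.map F.c).prod =
      ((-1:ℂ)^((l.filter (fun a => a ≠ b)).length)) • ((l.map F.c).prod * F.c b) := by
  induction l with
  | nil => simp
  | cons a t ih =>
    have swap : F.c b * F.c a = (if a = b then (1:ℂ) else -1) • (F.c a * F.c b) := by
      by_cases hab : a = b
      · subst hab; simp
      · rw [if_neg hab, F.anticomm b a (Ne.symm hab)]; simp
    simp only [List.map_cons, List.prod_cons, List.filter_cons]
    rw [← mul_assoc, swap, smul_mul_assoc, mul_assoc, ih, mul_smul_comm, smul_smul]
    by_cases hab : a = b
    · simp [hab, mul_assoc]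
    · have : (decide (a ≠ b)) = true := by simp [hab]
      rw [this, if_pos rfl, if_neg hab]
      simp only [List.length_cons, pow_succ, mul_assoc]
      ring_nf

lemma maj_trace_zero (b : Fin (2*m)) (l : List (Fin (2*m)))
    (h : Odd ((l.filter (fun a => a ≠ b)).length)) :
    ((l.map F.c).prod).trace = 0 := by
  set X := (l.map F.c).prod with hX
  have h1 : F.c b * X = (-1 : ℂ) • (X * F.c b) := by
    rw [maj_pass F b l, ← hX, Odd.neg_one_pow]
    exact_mod_cast h
  have h2 : X.trace = ((F.c b * (F.c b * X))).trace := by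
    rw [← mul_assoc, F.sq, one_mul]
  rw [h1] at h2
  rw [trace_mul_comm] at h2
  have : ((-1:ℂ) • (X * F.c b) * F.c b) = (-1:ℂ) • X := by
    rw [smul_mul_assoc, mul_assoc, F.sq, mul_one]
  rw [this, trace_smul] at h2
  simp only [neg_smul, one_smul] at h2
  linear_combination h2 / 2


lemma maj_sq_list (l : List (Fin (2*m))) (hl : l.Nodup) :
    (l.map F.c).prod * (l.map F.c).prod = ((-1:ℂ)^(l.length.choose 2)) • 1 := by
  induction l with
  | nil => simp
  | cons a t ih =>
    have hat : a ∉ t := by simp [List.nodup_cons] at hl; exact hl.1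
    have ht : t.Nodup := (List.nodup_cons.mp hl).2
    have hfil : t.filter (fun x => x ≠ a) = t := by
      apply List.filter_eq_self.mpr
      intro x hx
      simp only [decide_eq_true_eq]
      exact fun h => hat (h ▸ hx)
    have pass := maj_pass F a t
    rw [hfil] at pass
    set P := (t.map F.c).prod with hP
    have hmove : P * F.c a = ((-1:ℂ)^t.length) • (F.c a * P) := by
      rw [pass, smul_smul, ← pow_add]
      have : (-1:ℂ)^(t.length + t.length) = 1 := by
        rw [← two_mul, pow_mul]; norm_num
      rw [this, one_smul]
    simp only [List.map_cons, List.prod_cons]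
    calc F.c a * P * (F.c a * P) = F.c a * (P * F.c a) * P := by
          simp only [mul_assoc]
      _ = ((-1:ℂ)^t.length) • (F.c a * (F.c a * P) * P) := by
          rw [hmove]; simp only [mul_smul_comm, smul_mul_assoc, mul_assoc]
      _ = ((-1:ℂ)^t.length) • (P * P) := by rw [← mul_assoc, F.sq, one_mul]
      _ = ((-1:ℂ)^t.length * (-1:ℂ)^(t.length.choose 2)) • 1 := by
          rw [ih ht, smul_smul]
      _ = ((-1:ℂ)^((t.length + 1).choose 2)) • 1 := by
          rw [← pow_add]
          congr 2
          rw [Nat.choose_succ_succ, Nat.choose_one_right, Nat.add_comm]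


lemma filter_len_count {β : Type*} [DecidableEq β] (b : β) (l : List β) :
    (l.filter (fun a => a ≠ b)).length + l.count b = l.length := by
  induction l with
  | nil => simp
  | cons a t ih =>
    by_cases hab : a = b
    · subst hab
      simp [List.filter_cons, List.count_cons, ← ih]
      omega
    · simp [List.filter_cons, List.count_cons, hab, ← ih]
      omega

lemma majProd_trace (S : Finset (Fin (2*m))) (hS : S.Nonempty) (hE : Even S.card) :
    (majProd F S).trace = 0 := by
  obtain ⟨b, hb⟩ := hS
  apply maj_trace_zero F b
  have h1 := filter_len_count b (S.sort (· ≤ ·))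
  have h2 : (S.sort (· ≤ ·)).count b = 1 :=
    List.count_eq_one_of_mem (S.sort_nodup _) ((Finset.mem_sort _).mpr hb)
  have h3 : (S.sort (· ≤ ·)).length = S.card := Finset.length_sort _
  have h4 : 1 ≤ S.card := Finset.card_pos.mpr ⟨b, hb⟩
  obtain ⟨k, hk⟩ := hE
  refine ⟨k - 1, by omega⟩

lemma majProd_mul_trace_ne (S T : Finset (Fin (2*m))) (hST : S ≠ T)
    (hS : Even S.card) (hT : Even T.card) :
    (majProd F S * majProd F T).trace = 0 := by
  have hmul : majProd F S * majProd F T =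
      (((S.sort (· ≤ ·) ++ T.sort (· ≤ ·))).map F.c).prod := by
    rw [List.map_append, List.prod_append]; rfl
  obtain ⟨b, hb⟩ : ∃ b, ¬(b ∈ S ↔ b ∈ T) := by
    by_contra h
    push_neg at h
    exact hST (Finset.ext fun a => (h a))
  rw [hmul]
  apply maj_trace_zero F b
  have h1 := filter_len_count b (S.sort (· ≤ ·))
  have h1' := filter_len_count b (T.sort (· ≤ ·))
  have hcS : (S.sort (· ≤ ·)).count b = if b ∈ S then 1 else 0 := by
    split
    · exact List.count_eq_one_of_mem (S.sort_nodup _) ((Finset.mem_sort _).mpr ‹_›)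
    · exact List.count_eq_zero.mpr (fun h => ‹b ∉ S› ((Finset.mem_sort _).mp h))
  have hcT : (T.sort (· ≤ ·)).count b = if b ∈ T then 1 else 0 := by
    split
    · exact List.count_eq_one_of_mem (T.sort_nodup _) ((Finset.mem_sort _).mpr ‹_›)
    · exact List.count_eq_zero.mpr (fun h => ‹b ∉ T› ((Finset.mem_sort _).mp h))
  have hlen : (List.filter (fun a => a ≠ b) (S.sort (· ≤ ·) ++ T.sort (· ≤ ·))).length
      = (List.filter (fun a => a ≠ b) (S.sort (· ≤ ·))).length
        + (List.filter (fun a => a ≠ b) (T.sort (· ≤ ·))).length := by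
    rw [List.filter_append, List.length_append]
  have h3 : (S.sort (· ≤ ·)).length = S.card := Finset.length_sort _
  have h3' : (T.sort (· ≤ ·)).length = T.card := Finset.length_sort _
  obtain ⟨k, hk⟩ := hS
  obtain ⟨k', hk'⟩ := hT
  rcases (by tauto : (b ∈ S ∧ b ∉ T) ∨ (b ∉ S ∧ b ∈ T)) with ⟨h5, h6⟩ | ⟨h5, h6⟩
  · rw [if_pos h5] at hcS; rw [if_neg h6] at hcT
    rw [hlen]; exact ⟨k + k' - 1, by omega⟩
  · rw [if_neg h5] at hcS; rw [if_pos h6] at hcT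
    rw [hlen]; exact ⟨k + k' - 1, by omega⟩

lemma majProd_sq (S : Finset (Fin (2*m))) :
    majProd F S * majProd F S = ((-1:ℂ)^(S.card.choose 2)) • 1 := by
  rw [majProd, maj_sq_list F _ (S.sort_nodup _), Finset.length_sort]

lemma maj_prod_conjT (l : List (Fin (2*m))) :
    ((l.map F.c).prod)ᴴ = (l.reverse.map F.c).prod := by
  induction l with
  | nil => simp
  | cons a t ih =>
    simp only [List.map_cons, List.prod_cons, List.reverse_cons, List.map_append,
      List.prod_append, List.map_cons, List.map_nil, List.prod_cons, List.prod_nil, mul_one]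
    rw [Matrix.conjTranspose_mul, ih, (F.herm a).eq]

lemma maj_rev_mul (l : List (Fin (2*m))) :
    (l.reverse.map F.c).prod * (l.map F.c).prod = 1 := by
  induction l with
  | nil => simp
  | cons a t ih =>
    simp only [List.map_cons, List.prod_cons, List.reverse_cons, List.map_append,
      List.prod_append, List.map_cons, List.map_nil, List.prod_cons, List.prod_nil, mul_one]
    rw [mul_assoc, ← mul_assoc (F.c a), F.sq, one_mul, ih]

lemma majProd_unitary (S : Finset (Fin (2*m))) :
    (majProd F S)ᴴ * majProd F S = 1 := by
  rw [majProd, maj_prod_conjT, maj_rev_mul]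


lemma corrOp_unitary (S : Finset (Fin (2*m))) :
    (corrOp F S)ᴴ * corrOp F S = 1 := by
  rw [corrOp, Matrix.conjTranspose_smul, smul_mul_assoc, mul_smul_comm, smul_smul]
  rw [majProd_unitary]
  have : star (Complex.I ^ (S.card / 2)) * Complex.I ^ (S.card / 2) = 1 := by
    rw [star_pow, ← mul_pow]
    norm_num [Complex.star_def, Complex.conj_I, Complex.I_mul_I]
  rw [this, one_smul]

lemma sign_lemma (k : ℕ) :
    (Complex.I ^ k * Complex.I ^ k) * (-1:ℂ)^((k+k).choose 2) = 1 := by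
  have h1 : Complex.I ^ k * Complex.I ^ k = (-1:ℂ)^k := by
    rw [← pow_add, ← two_mul, pow_mul, Complex.I_sq]
  have h2 : (k+k).choose 2 = k * (k + k - 1) := by
    rw [Nat.choose_two_right]
    have : (k+k) * (k+k-1) = 2 * (k * (k+k-1)) := by
      cases k with
      | zero => simp
      | succ j => ring_nf
    rw [this, Nat.mul_div_cancel_left _ (by norm_num)]
  rw [h1, h2, ← pow_add]
  have h3 : k + k * (k + k - 1) = 2 * (k * k) := by
    cases k with
    | zero => simp
    | succ j =>
      have : j + 1 + (j + 1) - 1 = j + 1 + j := by omega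
      rw [this]; ring
  rw [h3, pow_mul]
  norm_num

lemma corrOp_mul_self_trace (S : Finset (Fin (2*m))) (hE : Even S.card) :
    (corrOp F S * corrOp F S).trace = (2:ℂ)^m := by
  obtain ⟨k, hk⟩ := hE
  rw [corrOp, smul_mul_assoc, mul_smul_comm, smul_smul, majProd_sq]
  rw [Matrix.trace_smul, Matrix.trace_smul, Matrix.trace_one, smul_eq_mul, smul_eq_mul]
  have hd : S.card / 2 = k := by omega
  rw [hd, hk]
  have := sign_lemma k
  rw [← mul_assoc, this, one_mul]
  simp [Fintype.card_fin]


set_option maxHeartbeats 2000000 in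
lemma holder {ι : Type*} [Fintype ι] [DecidableEq ι] (τ A : Matrix ι ι ℂ)
    (hτ : τ.IsHermitian) (hA : Aᴴ * A = 1) :
    ‖(A * τ).trace‖ ≤ traceNorm τ := by
  set U : Matrix ι ι ℂ := (hτ.eigenvectorUnitary : Matrix ι ι ℂ) with hU
  set d : ι → ℝ := hτ.eigenvalues with hd
  have hUsm : star U * U = 1 := Matrix.UnitaryGroup.star_mul_self _
  have hUms : U * star U = 1 := mul_eq_one_comm.mp hUsm
  have hspec : τ = U * Matrix.diagonal (fun i => (d i : ℂ)) * star U := by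
    have := hτ.spectral_theorem
    rw [Unitary.conjStarAlgAut_apply] at this
    exact this
  set Q : Matrix ι ι ℂ := U * Matrix.diagonal (fun i => ((|d i| : ℝ) : ℂ)) * star U with hQ
  have hDpsd : (Matrix.diagonal (fun i => ((|d i| : ℝ) : ℂ))).PosSemidef := by
    refine Matrix.posSemidef_diagonal_iff.mpr fun i => ?_
    rw [Complex.zero_le_real]
    exact abs_nonneg _
  have hQpsd : Q.PosSemidef := by
    rw [hQ, Matrix.star_eq_conjTranspose]
    exact hDpsd.mul_mul_conjTranspose_same U
  have hQsq : Q ^ 2 = τᴴ * τ := by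
    rw [hτ.eq, pow_two, hQ]
    rw [hspec]
    have hD2 : (Matrix.diagonal (fun i => ((|d i| : ℝ) : ℂ))) * (Matrix.diagonal (fun i => ((|d i| : ℝ) : ℂ)))
        = (Matrix.diagonal (fun i => (d i : ℂ))) * (Matrix.diagonal (fun i => (d i : ℂ))) := by
      rw [Matrix.diagonal_mul_diagonal, Matrix.diagonal_mul_diagonal]
      have : (fun i => ((|d i| : ℝ) : ℂ) * ((|d i| : ℝ) : ℂ))
          = fun i => ((d i : ℝ) : ℂ) * ((d i : ℝ) : ℂ) := by
        funext i
        rw [← Complex.ofReal_mul, ← Complex.ofReal_mul, abs_mul_abs_self]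
      rw [this]
    calc (U * Matrix.diagonal (fun i => ((|d i| : ℝ) : ℂ)) * star U) *
        (U * Matrix.diagonal (fun i => ((|d i| : ℝ) : ℂ)) * star U)
        = U * (Matrix.diagonal (fun i => ((|d i| : ℝ) : ℂ)) * (star U * U) *
            Matrix.diagonal (fun i => ((|d i| : ℝ) : ℂ))) * star U := by
          simp only [mul_assoc]
      _ = U * (Matrix.diagonal (fun i => (d i : ℂ)) * Matrix.diagonal (fun i => (d i : ℂ)))
            * star U := by rw [hUsm, mul_one, hD2]
      _ = (U * Matrix.diagonal (fun i => (d i : ℂ)) * star U) *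
          (U * Matrix.diagonal (fun i => (d i : ℂ)) * star U) := by
          calc U * (Matrix.diagonal (fun i => (d i : ℂ)) * Matrix.diagonal (fun i => (d i : ℂ)))
              * star U
              = U * (Matrix.diagonal (fun i => (d i : ℂ)) * (star U * U) *
                Matrix.diagonal (fun i => (d i : ℂ))) * star U := by rw [hUsm, mul_one]
            _ = _ := by simp only [mul_assoc]
  have hsqrt : (Matrix.posSemidef_conjTranspose_mul_self τ).1.cfc Real.sqrt = Q := by
    rw [← (Matrix.posSemidef_conjTranspose_mul_self τ).1.cfc_eq, ← hQsq]
    have hQτ : Q = cfc (fun x : ℝ => |x|) τ := by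
      rw [hτ.cfc_eq, Matrix.IsHermitian.cfc, Unitary.conjStarAlgAut_apply]
      rfl
    have hτsq : Q ^ 2 = τ ^ 2 := by
      rw [hQsq, hτ.eq, pow_two]
    rw [hτsq, ← cfc_comp_pow (R := ℝ) Real.sqrt 2 τ (by fun_prop) hτ.isSelfAdjoint, hQτ]
    congr 1
    funext x
    exact Real.sqrt_sq_eq_abs x
  have htrQ : Q.trace = ∑ i, ((|d i| : ℝ) : ℂ) := by
    rw [hQ, Matrix.trace_mul_cycle, hUsm, one_mul, Matrix.trace_diagonal]
  have htn : traceNorm τ = ∑ i, |d i| := by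
    have htn0 : traceNorm τ =
        ((Matrix.posSemidef_conjTranspose_mul_self τ).1.cfc Real.sqrt).trace.re := by
      rw [Matrix.IsHermitian.cfc, Unitary.conjStarAlgAut_apply]
      rfl
    rw [htn0, hsqrt, htrQ]
    push_cast
    rw [Complex.re_sum]
    simp
  set B : Matrix ι ι ℂ := star U * A * U with hB
  have hBu : Bᴴ * B = 1 := by
    have hBt : Bᴴ = star U * Aᴴ * U := by
      rw [hB]
      simp only [Matrix.star_eq_conjTranspose, Matrix.conjTranspose_mul,
        Matrix.conjTranspose_conjTranspose]
      simp only [mul_assoc]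
    rw [hBt, hB]
    calc star U * Aᴴ * U * (star U * A * U)
        = star U * (Aᴴ * ((U * star U) * A)) * U := by simp only [mul_assoc]
      _ = star U * (Aᴴ * A) * U := by rw [hUms, one_mul]
      _ = star U * U := by rw [hA, mul_one]
      _ = 1 := hUsm
  have hBle : ∀ i, ‖B i i‖ ≤ 1 := by
    intro i
    have h1 : (Bᴴ * B) i i = 1 := by rw [hBu]; simp [Matrix.one_apply]
    have h2 : (Bᴴ * B) i i = ∑ j, (Complex.normSq (B j i) : ℂ) := by
      rw [Matrix.mul_apply]
      refine Finset.sum_congr rfl fun j _ => ?_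
      rw [Matrix.conjTranspose_apply, Complex.normSq_eq_conj_mul_self]
      rfl
    have h3 : ∑ j, Complex.normSq (B j i) = 1 := by
      have h4 := h1
      rw [h2] at h4
      exact_mod_cast h4
    have h5 : Complex.normSq (B i i) ≤ 1 := by
      rw [← h3]
      exact Finset.single_le_sum (f := fun j => Complex.normSq (B j i)) (fun j _ => Complex.normSq_nonneg _) (Finset.mem_univ i)
    rw [Complex.norm_def]
    calc Real.sqrt (Complex.normSq (B i i)) ≤ Real.sqrt 1 := Real.sqrt_le_sqrt h5
      _ = 1 := Real.sqrt_one
  have htrace : (A * τ).trace = ∑ i, B i i * (d i : ℂ) := by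
    rw [hspec]
    have : A * (U * Matrix.diagonal (fun i => (d i : ℂ)) * star U) =
        (A * U * Matrix.diagonal (fun i => (d i : ℂ))) * star U := by
      simp only [mul_assoc]
    rw [this, Matrix.trace_mul_cycle]
    have h6 : star U * (A * U) * Matrix.diagonal (fun i => (d i : ℂ))
        = B * Matrix.diagonal (fun i => (d i : ℂ)) := by
      rw [hB]; simp only [mul_assoc]
    rw [h6, Matrix.trace]
    refine Finset.sum_congr rfl fun i _ => ?_
    rw [Matrix.diag_apply, Matrix.mul_diagonal]
  rw [htrace, htn]
  calc ‖∑ i, B i i * (d i : ℂ)‖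
      ≤ ∑ i, ‖B i i * (d i : ℂ)‖ := by
        exact norm_sum_le _ _
    _ ≤ ∑ i, |d i| := by
        refine Finset.sum_le_sum fun i _ => ?_
        rw [norm_mul, Complex.norm_real, Real.norm_eq_abs]
        calc ‖B i i‖ * |d i| ≤ 1 * |d i| :=
              mul_le_mul_of_nonneg_right (hBle i) (abs_nonneg _)
          _ = |d i| := one_mul _

end Aux

/-- For an even Hermitian `τ` with `Tr τ = 0` and `‖τ‖₁ ≤ ε`, written as
`τ = α₀ I/2^m + Σ_S α_S i^k c_{a_1}⋯c_{a_{2k}}`, one has `α₀ = 0` and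
`|α_S| ≤ ε/2^m` for every nonempty even subset `S`. -/
theorem stmt_13 (m : ℕ) (hm : 1 ≤ m) (F : MajoranaFamily m) (τ : Mat m) (ε : ℝ)
    (hherm : τ.IsHermitian) (htr : τ.trace = 0) (hnorm : traceNorm τ ≤ ε)
    (α₀ : ℝ) (α : Finset (Fin (2*m)) → ℝ)
    (hrep : τ = (α₀ / 2^m : ℝ) • (1 : Mat m) +
      ∑ S ∈ Finset.univ.filter
          (fun S : Finset (Fin (2*m)) => S.Nonempty ∧ Even S.card),
        α S • corrOp F S) :
    α₀ = 0 ∧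
      ∀ S ∈ Finset.univ.filter
          (fun S : Finset (Fin (2*m)) => S.Nonempty ∧ Even S.card),
        |α S| ≤ ε / 2^m := by
  classical
  have h2m : ((2:ℂ)^m) ≠ 0 := by positivity
  have h2mr : (0:ℝ) < 2^m := by positivity
  -- traces of corrOp vanish on the index set
  have hctr : ∀ S ∈ Finset.univ.filter
      (fun S : Finset (Fin (2*m)) => S.Nonempty ∧ Even S.card),
      (corrOp F S).trace = 0 := by
    intro S hS
    rw [Finset.mem_filter] at hS
    rw [corrOp, Matrix.trace_smul, majProd_trace F S hS.2.1 hS.2.2, smul_zero]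
  -- α₀ = 0
  have htrace1 : (1 : Mat m).trace = (2:ℂ)^m := by
    rw [Matrix.trace_one]
    simp [Fintype.card_fin]
  have hτtr : τ.trace = ((α₀ / 2^m : ℝ) : ℂ) * (2:ℂ)^m := by
    rw [hrep, Matrix.trace_add, Matrix.trace_smul, Matrix.trace_sum, htrace1]
    rw [Finset.sum_eq_zero (fun S hS => by rw [Matrix.trace_smul, hctr S hS, smul_zero])]
    rw [add_zero, Complex.real_smul]
  have hα₀ : α₀ = 0 := by
    rw [htr] at hτtr
    rcases mul_eq_zero.mp hτtr.symm with h | h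
    · have h2 : (α₀ / 2^m : ℝ) = 0 := by exact_mod_cast h
      rcases div_eq_zero_iff.mp h2 with h3 | h3
      · exact h3
      · exact absurd h3 (ne_of_gt h2mr)
    · exact absurd h h2m
  refine ⟨hα₀, ?_⟩
  intro S hS
  have hSmem := hS
  rw [Finset.mem_filter] at hS
  -- compute the trace of corrOp F S * τ
  have hcross : ∀ T ∈ Finset.univ.filter
      (fun T : Finset (Fin (2*m)) => T.Nonempty ∧ Even T.card), T ≠ S →
      (corrOp F S * corrOp F T).trace = 0 := by
    intro T hT hTS
    rw [Finset.mem_filter] at hT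
    rw [corrOp, corrOp, smul_mul_assoc, mul_smul_comm, smul_smul,
      Matrix.trace_smul, majProd_mul_trace_ne F S T (Ne.symm hTS) hS.2.2 hT.2.2, smul_zero]
  have hkey : (corrOp F S * τ).trace = ((α S : ℝ) : ℂ) * (2:ℂ)^m := by
    rw [hrep, mul_add, Matrix.trace_add, mul_smul_comm, Matrix.trace_smul, mul_one]
    rw [hctr S hSmem, smul_zero, zero_add, Finset.mul_sum, Matrix.trace_sum]
    have : ∀ T ∈ Finset.univ.filter
        (fun T : Finset (Fin (2*m)) => T.Nonempty ∧ Even T.card),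
        (corrOp F S * α T • corrOp F T).trace
          = if T = S then ((α S : ℝ) : ℂ) * (2:ℂ)^m else 0 := by
      intro T hT
      rw [mul_smul_comm, Matrix.trace_smul]
      by_cases hTS : T = S
      · subst hTS
        rw [corrOp_mul_self_trace F T hS.2.2, if_pos rfl, Complex.real_smul]
      · rw [hcross T hT hTS, smul_zero, if_neg hTS]
    rw [Finset.sum_congr rfl this, Finset.sum_ite_eq' _ S, if_pos hSmem]
  -- apply the trace-norm bound
  have hb := holder τ (corrOp F S) hherm (corrOp_unitary F S)
  rw [hkey] at hb
  have habs : ‖((α S : ℝ) : ℂ) * (2:ℂ)^m‖ = |α S| * 2^m := by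
    rw [norm_mul, Complex.norm_real, Real.norm_eq_abs, norm_pow, Complex.norm_two]
  rw [habs] at hb
  have : |α S| * 2^m ≤ ε := le_trans hb hnorm
  rw [le_div_iff₀ h2mr]
  exact this


end
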